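/- Let ω : ℕ → ℝ be any function with ω(n) → ∞ as n → ∞, and let k = k(n) = ⌊√n/(ω(n)·ln n)⌋. For each n, let each of k zombies independently choose a sequence (σ_t)_{t=1}^{4n} of i.i.d. uniformly random permutations of a 4-element set of directions {U, D, L, R}. Call a sequence regular if for every direction α ∈ {U,D,L,R} and every interval I of ⌊20·ln n⌋ consecutive integers contained in [1, 4n], there are at least ⌈ln n⌉ indices i ∈ I such that α is the first symbol of the permutation σ_i. Then the probability that the sequences of all k zombies are regular tends to 1 as n → ∞. -/

import Mathlib

open Filter

/-- A sequence of `4n` orderings (permutations, where `σ i 0` is the first symbol of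
the `i`-th ordering) of a 4-element set of directions is *regular* if for every
direction `α` and every interval of `⌊20 ln n⌋` consecutive time steps within the
`4n` steps, there are at least `⌈ln n⌉` steps `i` in the interval whose first symbol
is `α`. -/
def FirstSymbolRegular (n : ℕ) (σ : Fin (4 * n) → Equiv.Perm (Fin 4)) : Prop :=
  ∀ α : Fin 4, ∀ a : ℕ, a + ⌊(20 : ℝ) * Real.log n⌋₊ ≤ 4 * n →
    ⌈Real.log n⌉₊ ≤
      {i : Fin (4 * n) |
        a ≤ (i : ℕ) ∧ (i : ℕ) < a + ⌊(20 : ℝ) * Real.log n⌋₊ ∧ σ i 0 = α}.ncard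

open Finset

/-- counting functions with a prescribed single coordinate constraint -/
lemma zz_countB {ι W : Type*} [Fintype ι] [DecidableEq ι] [Fintype W] [DecidableEq W]
    (j : ι) (T : Finset W) :
    (univ.filter fun z : ι → W => z j ∈ T).card
      = T.card * (Fintype.card W) ^ (Fintype.card ι - 1) := by
  have h : (univ.filter fun z : ι → W => z j ∈ T)
      = Fintype.piFinset fun i => if i = j then T else (univ : Finset W) := by
    ext f
    simp only [mem_filter, mem_univ, true_and, Fintype.mem_piFinset]
    constructor
    · intro h i
      by_cases hij : i = j
      · subst hij; simp [h]
      · simp [hij]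
    · intro h
      have := h j
      simpa using this
  rw [h, Fintype.card_piFinset, ← Finset.mul_prod_erase univ _ (mem_univ j)]
  simp only [if_pos rfl]
  congr 1
  rw [Finset.prod_congr rfl (fun i hi => by
    rw [if_neg (Finset.mem_erase.1 hi).1]), Finset.prod_const, Finset.card_univ,
    Finset.card_erase_of_mem (mem_univ j), Finset.card_univ]

/-- union-bound style count for functions whose "success set" in `I` is small -/
lemma zz_countA {ι X : Type*} [Fintype ι] [DecidableEq ι] [Fintype X] [DecidableEq X]
    (p : X → Prop) [DecidablePred p] (I : Finset ι) (t : ℕ) :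
    (univ.filter fun f : ι → X => ((I.filter fun i => p (f i)).card < t)).card ≤
      (∑ d ∈ range t, I.card.choose d * ((univ : Finset X).filter p).card ^ d *
        ((univ : Finset X).filter fun x => ¬ p x).card ^ (I.card - d)) *
        (Fintype.card X) ^ (Fintype.card ι - I.card) := by
  set A := ((univ : Finset X).filter p).card with hA
  set B := ((univ : Finset X).filter fun x => ¬ p x).card with hB
  have hsub : (univ.filter fun f : ι → X => ((I.filter fun i => p (f i)).card < t)) ⊆
      (range t).biUnion fun d => (I.powersetCard d).biUnion fun S =>
        univ.filter fun f : ι → X => (I.filter fun i => p (f i)) = S := by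
    intro f hf
    simp only [mem_filter, mem_univ, true_and] at hf
    refine mem_biUnion.2 ⟨(I.filter fun i => p (f i)).card, mem_range.2 hf, ?_⟩
    exact mem_biUnion.2 ⟨I.filter fun i => p (f i),
      mem_powersetCard.2 ⟨filter_subset _ _, rfl⟩, by simp⟩
  refine (card_le_card hsub).trans (card_biUnion_le.trans ?_)
  rw [Finset.sum_mul]
  refine sum_le_sum fun d _ => card_biUnion_le.trans ?_
  have hbound : ∀ S ∈ I.powersetCard d,
      (univ.filter fun f : ι → X => (I.filter fun i => p (f i)) = S).card ≤
        A ^ d * B ^ (I.card - d) * (Fintype.card X) ^ (Fintype.card ι - I.card) := by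
    intro S hS
    obtain ⟨hSI, hScard⟩ := mem_powersetCard.1 hS
    have hsub2 : (univ.filter fun f : ι → X => (I.filter fun i => p (f i)) = S) ⊆
        Fintype.piFinset fun i => if i ∈ S then (univ : Finset X).filter p
          else if i ∈ I then (univ : Finset X).filter (fun x => ¬ p x) else univ := by
      intro f hf
      simp only [mem_filter, mem_univ, true_and] at hf
      rw [Fintype.mem_piFinset]
      intro i
      by_cases hiS : i ∈ S
      · have h1 : i ∈ I.filter fun i => p (f i) := hf ▸ hiS
        simp only [mem_filter] at h1
        simp [hiS, h1.2]
      · by_cases hiI : i ∈ I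
        · have h1 : i ∉ I.filter fun i => p (f i) := by rw [hf]; exact hiS
          simp only [mem_filter] at h1
          have : ¬ p (f i) := fun hp => h1 ⟨hiI, hp⟩
          simp [hiS, hiI, this]
        · simp [hiS, hiI]
    refine (card_le_card hsub2).trans ?_
    rw [Fintype.card_piFinset, ← Finset.prod_mul_prod_compl I, ← Finset.prod_sdiff hSI]
    have e1 : ∏ i ∈ S, (if i ∈ S then (univ : Finset X).filter p
        else if i ∈ I then (univ : Finset X).filter (fun x => ¬ p x) else univ).card = A ^ d := by
      rw [Finset.prod_eq_pow_card (b := A) (fun i hi => by rw [if_pos hi]), hScard]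
    have e2 : ∏ i ∈ I \ S, (if i ∈ S then (univ : Finset X).filter p
        else if i ∈ I then (univ : Finset X).filter (fun x => ¬ p x) else univ).card
        = B ^ (I.card - d) := by
      rw [Finset.prod_eq_pow_card (b := B) (fun i hi => by
        obtain ⟨h1, h2⟩ := Finset.mem_sdiff.1 hi
        rw [if_neg h2, if_pos h1]), Finset.card_sdiff_of_subset hSI, hScard]
    have e3 : ∏ i ∈ Iᶜ, (if i ∈ S then (univ : Finset X).filter p
        else if i ∈ I then (univ : Finset X).filter (fun x => ¬ p x) else univ).card
        = (Fintype.card X) ^ (Fintype.card ι - I.card) := by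
      rw [Finset.prod_eq_pow_card (b := Fintype.card X) (fun i hi => by
        have h1 : i ∉ I := Finset.mem_compl.1 hi
        have h2 : i ∉ S := fun h => h1 (hSI h)
        rw [if_neg h2, if_neg h1, Finset.card_univ]), Finset.card_compl]
    rw [e1, e2, e3]
    ring_nf
    exact le_refl _
  calc ∑ S ∈ I.powersetCard d,
        (univ.filter fun f : ι → X => (I.filter fun i => p (f i)) = S).card
      ≤ (I.powersetCard d).card *
          (A ^ d * B ^ (I.card - d) * (Fintype.card X) ^ (Fintype.card ι - I.card)) := by
        simpa using Finset.sum_le_card_nsmul _ _ _ hbound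
    _ = I.card.choose d * A ^ d * B ^ (I.card - d) *
          (Fintype.card X) ^ (Fintype.card ι - I.card) := by
        rw [Finset.card_powersetCard]; ring

lemma zz_card_interval (N a m : ℕ) (h : a + m ≤ N) :
    ((univ : Finset (Fin N)).filter fun i : Fin N => a ≤ (i:ℕ) ∧ (i:ℕ) < a + m).card = m := by
  have h2 : ((univ : Finset (Fin N)).filter fun i : Fin N => a ≤ (i:ℕ) ∧ (i:ℕ) < a + m).card
      = (Finset.Ico a (a+m)).card := by
    refine Finset.card_bij (fun (i : Fin N) _ => (i : ℕ)) ?_ ?_ ?_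
    · intro i hi
      simp only [mem_filter, mem_univ, true_and] at hi
      exact Finset.mem_Ico.2 hi
    · intro i _ j _ hij
      exact Fin.val_injective hij
    · intro x hx
      obtain ⟨h1', h2'⟩ := Finset.mem_Ico.1 hx
      exact ⟨⟨x, lt_of_lt_of_le h2' h⟩, by simp [h1', h2'], rfl⟩
  rw [h2, Nat.card_Ico]
  omega

lemma zz_step (m j : ℕ) (h : 4 * j + 3 ≤ m) :
    m.choose j * 6 ^ j * 18 ^ (m - j) ≤ m.choose (j+1) * 6 ^ (j+1) * 18 ^ (m - (j+1)) := by
  have key : (m.choose j * 6 ^ j * 18 ^ (m - j)) * (m - j)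
      = (m.choose (j+1) * 6 ^ (j+1) * 18 ^ (m - (j+1))) * (3 * (j+1)) := by
    have h18 : 18 ^ (m - j) = 18 ^ (m - (j+1)) * 18 := by
      rw [← pow_succ]
      congr 1
      omega
    have hc := Nat.choose_succ_right_eq m j
    calc m.choose j * 6 ^ j * 18 ^ (m - j) * (m - j)
        = (m.choose j * (m - j)) * 6 ^ j * 18 ^ (m - j) := by ring
      _ = (m.choose (j+1) * (j+1)) * 6 ^ j * (18 ^ (m - (j+1)) * 18) := by rw [hc, h18]
      _ = m.choose (j+1) * 6 ^ (j+1) * 18 ^ (m - (j+1)) * (3 * (j+1)) := by ring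
  have h3 : 3 * (j+1) ≤ m - j := by omega
  have h4 := key.le.trans (Nat.mul_le_mul_left _ h3)
  exact Nat.le_of_mul_le_mul_right h4 (by omega)

lemma zz_mono (m : ℕ) : ∀ s, 4 * s ≤ m → ∀ d, d ≤ s →
    m.choose d * 6 ^ d * 18 ^ (m - d) ≤ m.choose s * 6 ^ s * 18 ^ (m - s) := by
  intro s
  induction s with
  | zero =>
    intro _ d hd
    simp [Nat.le_zero.1 hd]
  | succ s ih =>
    intro hm d hd
    by_cases hds : d = s + 1
    · subst hds; exact le_rfl
    · exact (ih (by omega) d (by omega)).trans (zz_step m s (by omega))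

lemma zz_sum_le (m t : ℕ) (ht : 1 ≤ t) (hm : 4 * (t-1) ≤ m) :
    ∑ d ∈ range t, m.choose d * 6 ^ d * 18 ^ (m - d)
      ≤ t * (m.choose (t-1) * 6 ^ (t-1) * 18 ^ (m - (t-1))) := by
  have h := Finset.sum_le_card_nsmul (range t)
    (fun d => m.choose d * 6 ^ d * 18 ^ (m - d))
    (m.choose (t-1) * 6 ^ (t-1) * 18 ^ (m - (t-1)))
    (fun d hd => zz_mono m (t-1) hm d (by rw [mem_range] at hd; omega))
  simpa [card_range, mul_comm] using h

lemma zz_perm6 (α : Fin 4) :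
    ((univ : Finset (Equiv.Perm (Fin 4))).filter fun π => π 0 = α).card = 6 := by
  fin_cases α <;> decide

lemma zz_perm18 (α : Fin 4) :
    ((univ : Finset (Equiv.Perm (Fin 4))).filter fun π => ¬ π 0 = α).card = 18 := by
  fin_cases α <;> decide

lemma zz_perm24 : Fintype.card (Equiv.Perm (Fin 4)) = 24 := by decide

lemma zz_triple (n k m t : ℕ) (j : Fin k) (α : Fin 4) (a : ℕ) (ha : a + m ≤ 4 * n) :
    (((univ : Finset (Fin k → Fin (4*n) → Equiv.Perm (Fin 4))).filter fun z =>
      (((univ : Finset (Fin (4*n))).filter fun i : Fin (4*n) => a ≤ (i:ℕ) ∧ (i:ℕ) < a + m).filter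
        fun i => z j i 0 = α).card < t).card : ℝ)
      ≤ ((∑ d ∈ range t, m.choose d * 6 ^ d * 18 ^ (m - d) : ℕ) : ℝ) / 24 ^ m *
        (Fintype.card (Fin k → Fin (4*n) → Equiv.Perm (Fin 4))) := by
  have hk : 1 ≤ k := j.pos
  set I := (univ : Finset (Fin (4*n))).filter
    (fun i : Fin (4*n) => a ≤ (i:ℕ) ∧ (i:ℕ) < a + m) with hIdef
  have hI : I.card = m := zz_card_interval (4*n) a m ha
  set q := ∑ d ∈ range t, m.choose d * 6 ^ d * 18 ^ (m - d) with hq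
  set Tfin := (univ : Finset (Fin (4*n) → Equiv.Perm (Fin 4))).filter
    (fun w => ((I.filter fun i => w i 0 = α).card < t)) with hTfin
  have step1 : ((univ : Finset (Fin k → Fin (4*n) → Equiv.Perm (Fin 4))).filter fun z =>
      ((I.filter fun i => z j i 0 = α).card < t))
      = (univ : Finset (Fin k → Fin (4*n) → Equiv.Perm (Fin 4))).filter
        fun z => z j ∈ Tfin := by
    apply Finset.filter_congr
    intro z _
    simp [hTfin]
  have step2 := zz_countB (W := Fin (4*n) → Equiv.Perm (Fin 4)) j Tfin
  have step3 : Tfin.card ≤ q * 24 ^ (4*n - m) := by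
    have h := zz_countA (X := Equiv.Perm (Fin 4)) (fun x => x 0 = α) I t
    rw [hI] at h
    simp only [zz_perm6, zz_perm18, zz_perm24, Fintype.card_fin] at h
    exact h
  have hWcard : Fintype.card (Fin (4*n) → Equiv.Perm (Fin 4)) = 24 ^ (4*n) := by
    rw [Fintype.card_fun, zz_perm24, Fintype.card_fin]
  have hΩ : Fintype.card (Fin k → Fin (4*n) → Equiv.Perm (Fin 4))
      = 24 ^ m * (24 ^ ((4*n - m) + 4*n*(k-1))) := by
    rw [Fintype.card_fun, hWcard, Fintype.card_fin, ← pow_mul, ← pow_add]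
    congr 1
    have hmn : m ≤ 4 * n := le_trans (Nat.le_add_left m a) ha
    cases k with
    | zero => exact absurd hk (by simp)
    | succ k' =>
      have h1 : k' + 1 - 1 = k' := rfl
      rw [h1, ← Nat.add_assoc, Nat.add_sub_cancel' hmn]
      ring
  have step4 : ((univ : Finset (Fin k → Fin (4*n) → Equiv.Perm (Fin 4))).filter fun z =>
      ((I.filter fun i => z j i 0 = α).card < t)).card
      ≤ q * (24 ^ ((4*n - m) + 4*n*(k-1))) := by
    rw [step1, step2]
    calc Tfin.card * (Fintype.card (Fin (4*n) → Equiv.Perm (Fin 4))) ^ (Fintype.card (Fin k) - 1)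
        ≤ (q * 24 ^ (4*n - m)) *
            (Fintype.card (Fin (4*n) → Equiv.Perm (Fin 4))) ^ (Fintype.card (Fin k) - 1) :=
          Nat.mul_le_mul_right _ step3
      _ = q * (24 ^ ((4*n - m) + 4*n*(k-1))) := by
          rw [hWcard, Fintype.card_fin, ← pow_mul, pow_add]
          ring
  calc ((((univ : Finset (Fin k → Fin (4*n) → Equiv.Perm (Fin 4))).filter fun z =>
      ((I.filter fun i => z j i 0 = α).card < t)).card : ℕ) : ℝ)
      ≤ ((q * (24 ^ ((4*n - m) + 4*n*(k-1))) : ℕ) : ℝ) := by exact_mod_cast step4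
    _ = (q : ℝ) / 24 ^ m * (Fintype.card (Fin k → Fin (4*n) → Equiv.Perm (Fin 4))) := by
        rw [hΩ]
        push_cast
        field_simp

-- numeric facts
lemma zz_exp95 : (6:ℝ) ≤ Real.exp (9/5) := by
  have h9 : (7776:ℝ) ≤ Real.exp 9 := by
    have h := Real.exp_one_gt_d9
    calc (7776:ℝ) ≤ 2.7182818283 ^ (9:ℕ) := by norm_num
      _ ≤ (Real.exp 1) ^ (9:ℕ) := pow_le_pow_left₀ (by norm_num) h.le 9
      _ = Real.exp 9 := by
          rw [← Real.exp_nat_mul]; norm_num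
  have h5 : (6:ℝ) ^ (5:ℕ) ≤ (Real.exp (9/5)) ^ (5:ℕ) := by
    rw [← Real.exp_nat_mul]
    norm_num
    linarith [h9]
  exact le_of_pow_le_pow_left₀ (by norm_num) (Real.exp_pos _).le h5

lemma zz_exp14 : (3:ℝ)/4 ≤ Real.exp (-(1/4)) := by
  have h1 : Real.exp (1/4) ≤ 4/3 := by
    have h4 : (Real.exp (1/4)) ^ (4:ℕ) ≤ (4/3:ℝ) ^ (4:ℕ) := by
      rw [← Real.exp_nat_mul]
      norm_num
      linarith [Real.exp_one_lt_d9]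
    exact le_of_pow_le_pow_left₀ (by norm_num) (by norm_num) h4
  rw [Real.exp_neg, le_inv_comm₀ (by norm_num) (Real.exp_pos _)]
  calc Real.exp (1/4) ≤ 4/3 := h1
    _ = (3/4:ℝ)⁻¹ := by norm_num

lemma zz_choose (m s : ℕ) (hs : 0 < s) :
    (m.choose s : ℝ) ≤ (Real.exp 1) ^ s * (m:ℝ) ^ s / (s:ℝ) ^ s := by
  have hfac_pos : (0:ℝ) < (s.factorial : ℝ) := by
    exact_mod_cast s.factorial_pos
  have hs_pos : (0:ℝ) < (s:ℝ) ^ s := by positivity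
  have c1 : (m.choose s : ℝ) ≤ (m:ℝ) ^ s / s.factorial := by
    rw [le_div_iff₀ hfac_pos]
    have h : m.choose s * s.factorial ≤ m ^ s := by
      rw [mul_comm, ← Nat.descFactorial_eq_factorial_mul_choose]
      exact Nat.descFactorial_le_pow m s
    exact_mod_cast h
  have c2 : ((s:ℝ)) ^ s ≤ Real.exp s * s.factorial := by
    have := Real.pow_div_factorial_le_exp (x := (s:ℝ)) (Nat.cast_nonneg s) s
    rw [div_le_iff₀ hfac_pos] at this
    linarith
  have c3 : (m:ℝ) ^ s / s.factorial ≤ (m:ℝ) ^ s * Real.exp s / (s:ℝ) ^ s := by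
    rw [div_le_div_iff₀ hfac_pos hs_pos]
    calc (m:ℝ) ^ s * (s:ℝ) ^ s ≤ (m:ℝ) ^ s * (Real.exp s * s.factorial) :=
          mul_le_mul_of_nonneg_left c2 (by positivity)
      _ = (m:ℝ) ^ s * Real.exp s * s.factorial := by ring
  calc (m.choose s : ℝ) ≤ (m:ℝ) ^ s / s.factorial := c1
    _ ≤ (m:ℝ) ^ s * Real.exp s / (s:ℝ) ^ s := c3
    _ = (Real.exp 1) ^ s * (m:ℝ) ^ s / (s:ℝ) ^ s := by
        rw [Real.exp_one_pow]
        ring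

lemma zz_main (ωn : ℝ) (n : ℕ) (hω1 : 1 ≤ ωn) (h6 : 6 ≤ Real.log n) (h4 : 4 ≤ n) :
    1 - 17 * Real.exp (1/4) * (Real.log n + 1) * Real.exp (-(9/20) * Real.log n) ≤
      (({z : Fin ⌊Real.sqrt n / (ωn * Real.log n)⌋₊ → Fin (4 * n) → Equiv.Perm (Fin 4) |
          ∀ j, FirstSymbolRegular n (z j)}.ncard : ℝ) /
        (Fintype.card
          (Fin ⌊Real.sqrt n / (ωn * Real.log n)⌋₊ → Fin (4 * n) → Equiv.Perm (Fin 4)) : ℝ)) := by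
  classical
  set L := Real.log n with hL
  set k := ⌊Real.sqrt n / (ωn * L)⌋₊ with hk
  set m := ⌊(20:ℝ) * L⌋₊ with hm
  set t := ⌈L⌉₊ with ht
  have hL0 : (0:ℝ) ≤ L := by linarith
  have hn0 : (0:ℝ) < n := by exact_mod_cast (by omega : 0 < n)
  have htL : L ≤ (t:ℝ) := Nat.le_ceil L
  have htt : (t:ℝ) < L + 1 := Nat.ceil_lt_add_one hL0
  have hmL : (m:ℝ) ≤ 20 * L := Nat.floor_le (by positivity)
  have hmL' : 20 * L < (m:ℝ) + 1 := Nat.lt_floor_add_one _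
  have ht6 : 6 ≤ t := by
    have h' : (6:ℝ) ≤ (t:ℝ) := h6.trans htL
    exact_mod_cast h'
  set s := t - 1 with hs
  have hst : s + 1 = t := by omega
  have hsR : (s:ℝ) = (t:ℝ) - 1 := by
    rw [hs, Nat.cast_sub (by omega : 1 ≤ t)]
    norm_num
  have hsL : (s:ℝ) ≤ L := by rw [hsR]; linarith
  have hsl : L - 1 ≤ (s:ℝ) := by rw [hsR]; linarith
  have hs5 : 5 ≤ s := by omega
  have hs0R : (0:ℝ) < (s:ℝ) := by exact_mod_cast (by omega : 0 < s)
  have h4s : 4 * s ≤ m := by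
    have hr : ((4 * s : ℕ) : ℝ) < (m:ℝ) + 1 := by push_cast; linarith
    have : (4 * s : ℕ) < m + 1 := by exact_mod_cast hr
    omega
  have hsm : s ≤ m := by omega
  have hm24 : (m:ℝ) ≤ 24 * (s:ℝ) := by linarith
  have hmsR : ((m - s : ℕ):ℝ) = (m:ℝ) - (s:ℝ) := by
    rw [Nat.cast_sub hsm]
  have hms19 : 19 * L - 1 ≤ ((m - s : ℕ):ℝ) := by rw [hmsR]; linarith
  -- sets
  set T := Fintype.card (Fin k → Fin (4 * n) → Equiv.Perm (Fin 4)) with hT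
  have hTpos : (0:ℝ) < (T : ℝ) := by exact_mod_cast Fintype.card_pos
  set G := (univ : Finset (Fin k → Fin (4*n) → Equiv.Perm (Fin 4))).filter
    (fun z => ∀ j, FirstSymbolRegular n (z j)) with hG
  set Bad := (univ : Finset (Fin k → Fin (4*n) → Equiv.Perm (Fin 4))).filter
    (fun z => ¬ ∀ j, FirstSymbolRegular n (z j)) with hBad
  have hncard : ({z : Fin k → Fin (4*n) → Equiv.Perm (Fin 4) |
      ∀ j, FirstSymbolRegular n (z j)}.ncard : ℝ) = (G.card : ℝ) := by
    congr 1
    rw [← Set.ncard_coe_finset G]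
    congr 1
    ext z
    simp [hG]
  have hsplit : (G.card : ℝ) + (Bad.card : ℝ) = (T : ℝ) := by
    have h1 : G.card + Bad.card = T := by
      rw [hG, hBad, Finset.card_filter_add_card_filter_not, Finset.card_univ]
    exact_mod_cast h1
  -- union bound
  set q := ∑ d ∈ range t, m.choose d * 6 ^ d * 18 ^ (m - d) with hq
  set BS := fun x : Fin k × Fin 4 × ℕ =>
    (univ : Finset (Fin k → Fin (4*n) → Equiv.Perm (Fin 4))).filter (fun z =>
      (((univ : Finset (Fin (4*n))).filter
          fun i : Fin (4*n) => x.2.2 ≤ (i:ℕ) ∧ (i:ℕ) < x.2.2 + m).filter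
        fun i => z x.1 i 0 = x.2.1).card < t) with hBS
  set F := (range (4*n+1)).filter (fun a => a + m ≤ 4*n) with hF
  set J := (univ : Finset (Fin k)) ×ˢ ((univ : Finset (Fin 4)) ×ˢ F) with hJ
  have hBadsub : Bad ⊆ J.biUnion BS := by
    intro z hz
    rw [hBad, mem_filter] at hz
    obtain ⟨-, hz⟩ := hz
    push_neg at hz
    obtain ⟨j, hj⟩ := hz
    rw [FirstSymbolRegular] at hj
    push_neg at hj
    obtain ⟨α, a, ha, hcnt⟩ := hj
    rw [mem_biUnion]
    refine ⟨(j, α, a), ?_, ?_⟩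
    · rw [hJ]
      refine Finset.mem_product.2 ⟨mem_univ _, Finset.mem_product.2 ⟨mem_univ _, ?_⟩⟩
      rw [hF, mem_filter, mem_range]
      refine ⟨?_, ha⟩
      show a < 4*n+1
      omega
    · rw [hBS, mem_filter]
      refine ⟨mem_univ _, ?_⟩
      have hcv : {i : Fin (4*n) | a ≤ (i:ℕ) ∧ (i:ℕ) < a + m ∧ z j i 0 = α}.ncard
          = (((univ : Finset (Fin (4*n))).filter
              fun i : Fin (4*n) => a ≤ (i:ℕ) ∧ (i:ℕ) < a + m).filter
            fun i => z j i 0 = α).card := by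
        rw [← Set.ncard_coe_finset]
        congr 1
        ext i
        simp [and_assoc]
      show (((univ : Finset (Fin (4*n))).filter
              fun i : Fin (4*n) => a ≤ (i:ℕ) ∧ (i:ℕ) < a + m).filter
            fun i => z j i 0 = α).card < t
      rw [← hcv]
      exact hcnt
  have hBadcard : (Bad.card : ℝ) ≤ (J.card : ℝ) * ((q:ℝ) / 24 ^ m * (T : ℝ)) := by
    have h1 : Bad.card ≤ ∑ x ∈ J, (BS x).card :=
      (card_le_card hBadsub).trans card_biUnion_le
    calc (Bad.card : ℝ) ≤ ((∑ x ∈ J, (BS x).card : ℕ) : ℝ) := by exact_mod_cast h1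
      _ = ∑ x ∈ J, ((BS x).card : ℝ) := by push_cast; rfl
      _ ≤ ∑ _x ∈ J, ((q:ℝ) / 24 ^ m * (T : ℝ)) := by
          refine Finset.sum_le_sum fun x hx => ?_
          have ha : x.2.2 + m ≤ 4*n := by
            rw [hJ] at hx
            obtain ⟨-, hx2⟩ := Finset.mem_product.1 hx
            obtain ⟨-, hx3⟩ := Finset.mem_product.1 hx2
            rw [hF, mem_filter] at hx3
            exact hx3.2
          exact zz_triple n k m t x.1 x.2.1 x.2.2 ha
      _ = (J.card : ℝ) * ((q:ℝ) / 24 ^ m * (T : ℝ)) := by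
          rw [Finset.sum_const, nsmul_eq_mul]
  have hJcard : (J.card : ℝ) ≤ (k : ℝ) * (4 * (4 * (n:ℝ) + 1)) := by
    have h1 : J.card = k * (4 * F.card) := by
      rw [hJ, Finset.card_product, Finset.card_product, Finset.card_univ,
        Finset.card_univ, Fintype.card_fin, Fintype.card_fin]
    have h2 : F.card ≤ 4*n+1 := by
      rw [hF]
      exact le_trans (Finset.card_filter_le _ _) (by rw [Finset.card_range])
    have h3 : J.card ≤ k * (4 * (4*n+1)) :=
      h1 ▸ Nat.mul_le_mul_left _ (Nat.mul_le_mul_left _ h2)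
    calc (J.card : ℝ) ≤ ((k * (4 * (4*n+1)) : ℕ) : ℝ) := by exact_mod_cast h3
      _ = (k : ℝ) * (4 * (4 * (n:ℝ) + 1)) := by push_cast; ring
  -- probability estimate
  have hq1 : (q:ℝ) ≤ (t:ℝ) * ((m.choose s : ℝ) * 6^s * 18^(m-s)) := by
    have h1 := zz_sum_le m t (by omega) (by omega)
    have h2 : ((q : ℕ) : ℝ) ≤ ((t * (m.choose (t-1) * 6 ^ (t-1) * 18 ^ (m - (t-1))) : ℕ) : ℝ) := by
      exact_mod_cast h1
    calc (q:ℝ) ≤ ((t * (m.choose (t-1) * 6 ^ (t-1) * 18 ^ (m - (t-1))) : ℕ) : ℝ) := h2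
      _ = (t:ℝ) * ((m.choose s : ℝ) * 6^s * 18^(m-s)) := by rw [← hs]; push_cast; ring
  have hqq : (q:ℝ)/24^m ≤ (t:ℝ) * (((m.choose s : ℝ) * (1/4)^s) * (3/4)^(m-s)) := by
    have h24 : ((24:ℝ))^m = 24^s * 24^(m-s) := by
      rw [← pow_add]
      congr 1
      omega
    have h6e : ((6:ℝ)^s * 18^(m-s)) / 24^m = (1/4)^s * (3/4)^(m-s) := by
      have hiden : (1/4:ℝ)^s * (3/4)^(m-s) = (6^s / 24^s) * (18^(m-s)/24^(m-s)) := by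
        rw [← div_pow, ← div_pow]
        norm_num
      rw [hiden, h24]
      field_simp
    calc (q:ℝ)/24^m ≤ ((t:ℝ) * ((m.choose s : ℝ) * 6^s * 18^(m-s)))/24^m := by gcongr
      _ = (t:ℝ) * ((m.choose s : ℝ) * (((6:ℝ)^s * 18^(m-s)) / 24^m)) := by ring
      _ = (t:ℝ) * (((m.choose s : ℝ) * (1/4)^s) * (3/4)^(m-s)) := by rw [h6e]; ring
  have hkey1 : (m.choose s : ℝ) * (1/4)^s ≤ Real.exp ((14/5)*L) := by
    have h1 : (m.choose s : ℝ) * (1/4)^s ≤ (Real.exp 1 * m / (4*(s:ℝ)))^s := by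
      have hz := zz_choose m s (by omega)
      calc (m.choose s:ℝ) * (1/4)^s ≤ ((Real.exp 1)^s * (m:ℝ)^s / (s:ℝ)^s) * (1/4)^s :=
            mul_le_mul_of_nonneg_right hz (by positivity)
        _ = (Real.exp 1 * m / (4*(s:ℝ)))^s := by
            have hrw : (Real.exp 1 * (m:ℝ) / (4*(s:ℝ)))^s
                = ((Real.exp 1)^s * (m:ℝ)^s) / ((4:ℝ)^s * (s:ℝ)^s) := by
              rw [div_pow, mul_pow, mul_pow]
            have hs_ne : ((s:ℝ))^s ≠ 0 := by positivity
            rw [hrw, div_pow, one_pow, div_mul_div_comm, mul_one]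
            rw [mul_comm ((s:ℝ)^s) ((4:ℝ)^s)]
    have h2 : (Real.exp 1 * m/(4*(s:ℝ)))^s ≤ (6 * Real.exp 1)^s := by
      apply pow_le_pow_left₀ (by positivity)
      rw [div_le_iff₀ (by positivity)]
      calc Real.exp 1 * m ≤ Real.exp 1 * (24*(s:ℝ)) :=
            mul_le_mul_of_nonneg_left hm24 (Real.exp_pos 1).le
        _ = 6*Real.exp 1*(4*(s:ℝ)) := by ring
    have h3 : ((6:ℝ) * Real.exp 1)^s ≤ Real.exp ((14/5)*L) := by
      have h6e : (6:ℝ)*Real.exp 1 ≤ Real.exp (14/5) := by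
        calc (6:ℝ)*Real.exp 1 ≤ Real.exp (9/5) * Real.exp 1 :=
              mul_le_mul_of_nonneg_right zz_exp95 (Real.exp_pos 1).le
          _ = Real.exp (14/5) := by rw [← Real.exp_add]; norm_num
      calc ((6:ℝ)*Real.exp 1)^s ≤ (Real.exp (14/5))^s := pow_le_pow_left₀ (by positivity) h6e s
        _ = Real.exp ((14/5)*(s:ℝ)) := by
            rw [← Real.exp_nat_mul]
            congr 1
            ring
        _ ≤ Real.exp ((14/5)*L) := Real.exp_le_exp.2 (by linarith)
    linarith [h1.trans (h2.trans h3)]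
  have hkey2 : ((3:ℝ)/4)^(m-s) ≤ Real.exp (-((19*L-1)/4)) := by
    calc ((3:ℝ)/4)^(m-s) ≤ (Real.exp (-(1/4)))^(m-s) :=
          pow_le_pow_left₀ (by norm_num) zz_exp14 _
      _ = Real.exp (-(((m-s:ℕ):ℝ))/4) := by
          rw [← Real.exp_nat_mul]
          congr 1
          ring
      _ ≤ Real.exp (-((19*L-1)/4)) := Real.exp_le_exp.2 (by linarith)
  have hfin : (q:ℝ)/24^m ≤ (L+1) * (Real.exp ((14/5)*L) * Real.exp (-((19*L-1)/4))) := by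
    calc (q:ℝ)/24^m ≤ (t:ℝ) * (((m.choose s : ℝ) * (1/4)^s) * (3/4)^(m-s)) := hqq
      _ ≤ (L+1) * (Real.exp ((14/5)*L) * Real.exp (-((19*L-1)/4))) := by
          have hmc : (0:ℝ) ≤ (m.choose s : ℝ) * (1/4)^s := by positivity
          apply mul_le_mul htt.le
          · exact mul_le_mul hkey1 hkey2 (by positivity) (Real.exp_pos _).le
          · positivity
          · linarith
  -- assemble: k and n bounds
  have hsqrt : Real.sqrt n = Real.exp (L/2) := by
    have hnL : (n:ℝ) = Real.exp L := (Real.exp_log hn0).symm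
    rw [hnL, show Real.exp L = (Real.exp (L/2))^(2:ℕ) from by
      rw [← Real.exp_nat_mul]; congr 1; ring]
    exact Real.sqrt_sq (Real.exp_pos _).le
  have hkR : (k:ℝ) ≤ Real.exp (L/2) := by
    rw [← hsqrt]
    have hωL1 : (1:ℝ) ≤ ωn * L := by
      have h' : (1:ℝ)*1 ≤ ωn*L :=
        mul_le_mul hω1 (by linarith) (by norm_num) (le_trans zero_le_one hω1)
      linarith
    calc (k:ℝ) ≤ Real.sqrt n / (ωn * L) :=
          Nat.floor_le (div_nonneg (Real.sqrt_nonneg _) (by linarith))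
      _ ≤ Real.sqrt n := div_le_self (Real.sqrt_nonneg _) hωL1
  have h16 : (4:ℝ) * (4 * (n:ℝ) + 1) ≤ 17 * Real.exp L := by
    have hnL : (n:ℝ) = Real.exp L := (Real.exp_log hn0).symm
    have h4' : (4:ℝ) ≤ (n:ℝ) := by exact_mod_cast h4
    rw [← hnL]
    linarith
  have hb : (Bad.card : ℝ) ≤ (17 * Real.exp (1/4) * (L + 1) * Real.exp (-(9/20) * L)) * T := by
    have hexp : Real.exp (L/2) * Real.exp L * Real.exp ((14/5)*L) * Real.exp (-((19*L-1)/4))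
        = Real.exp (1/4) * Real.exp (-(9/20)*L) := by
      rw [← Real.exp_add, ← Real.exp_add, ← Real.exp_add, ← Real.exp_add]
      congr 1
      ring
    calc (Bad.card : ℝ) ≤ (J.card : ℝ) * ((q:ℝ) / 24 ^ m * (T : ℝ)) := hBadcard
      _ ≤ ((k : ℝ) * (4 * (4 * (n:ℝ) + 1))) *
            (((L+1) * (Real.exp ((14/5)*L) * Real.exp (-((19*L-1)/4)))) * (T : ℝ)) := by
          apply mul_le_mul hJcard _ (by positivity) (by positivity)
          exact mul_le_mul_of_nonneg_right hfin hTpos.le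
      _ ≤ (Real.exp (L/2) * (17 * Real.exp L)) *
            (((L+1) * (Real.exp ((14/5)*L) * Real.exp (-((19*L-1)/4)))) * (T : ℝ)) := by
          apply mul_le_mul_of_nonneg_right _ (by positivity)
          exact mul_le_mul hkR h16 (by positivity) (Real.exp_pos _).le
      _ = (17 * Real.exp (1/4) * (L + 1) * Real.exp (-(9/20) * L)) * T := by
          calc (Real.exp (L/2) * (17 * Real.exp L)) *
            (((L+1) * (Real.exp ((14/5)*L) * Real.exp (-((19*L-1)/4)))) * (T : ℝ))
              = 17*(L+1)*(T:ℝ)*(Real.exp (L/2) * Real.exp L * Real.exp ((14/5)*L) *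
                  Real.exp (-((19*L-1)/4))) := by ring
            _ = (17 * Real.exp (1/4) * (L + 1) * Real.exp (-(9/20) * L)) * T := by
                rw [hexp]; ring
  -- finish
  rw [hncard]
  have hdiv : (G.card : ℝ)/(T:ℝ) = 1 - (Bad.card : ℝ)/(T:ℝ) := by
    field_simp
    linarith
  rw [hdiv]
  have hBT : (Bad.card : ℝ)/(T:ℝ) ≤ 17 * Real.exp (1/4) * (L + 1) * Real.exp (-(9/20) * L) :=
    (div_le_iff₀ hTpos).2 hb
  linarith


/-- With `k = ⌊√n/(ω(n) ln n)⌋` zombies, each independently choosing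
`4n` i.i.d. uniform orderings of the 4 directions (uniform measure on the finite
space of all such choices), the probability that all `k` zombies' sequences are
regular tends to `1` as `n → ∞`. -/
theorem stmt_12 (ω : ℕ → ℝ) (hω : Tendsto ω atTop atTop) :
    Tendsto (fun n : ℕ =>
      ({z : Fin ⌊Real.sqrt n / (ω n * Real.log n)⌋₊ → Fin (4 * n) → Equiv.Perm (Fin 4) |
          ∀ j, FirstSymbolRegular n (z j)}.ncard : ℝ) /
        (Fintype.card
          (Fin ⌊Real.sqrt n / (ω n * Real.log n)⌋₊ → Fin (4 * n) → Equiv.Perm (Fin 4)) : ℝ))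
      atTop (nhds 1) := by
  have hlog : Tendsto (fun n : ℕ => Real.log n) atTop atTop :=
    Real.tendsto_log_atTop.comp tendsto_natCast_atTop_atTop
  have hg0 : Tendsto (fun n : ℕ => 17 * Real.exp (1/4) * (Real.log n + 1) *
      Real.exp (-(9/20) * Real.log n)) atTop (nhds 0) := by
    have hψ : Tendsto (fun x : ℝ => 17 * Real.exp (1/4) *
        ((20/9) * (x * Real.exp (-x)) + Real.exp (-x))) atTop (nhds 0) := by
      have h1 : Tendsto (fun x : ℝ => x * Real.exp (-x)) atTop (nhds 0) := by
        have := Real.tendsto_pow_mul_exp_neg_atTop_nhds_zero 1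
        simpa using this
      have h2 : Tendsto (fun x : ℝ => Real.exp (-x)) atTop (nhds 0) :=
        Real.tendsto_exp_neg_atTop_nhds_zero
      have h3 := ((h1.const_mul (20/9:ℝ)).add h2).const_mul (17 * Real.exp (1/4))
      simpa using h3
    have hcomp : Tendsto (fun n : ℕ => (9/20) * Real.log n) atTop atTop :=
      hlog.const_mul_atTop (by norm_num)
    have h4 := hψ.comp hcomp
    refine h4.congr fun n => ?_
    show 17 * Real.exp (1/4) * ((20/9) * ((9/20)*Real.log n *
        Real.exp (-((9/20)*Real.log n))) + Real.exp (-((9/20)*Real.log n))) = _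
    have harg : -((9/20:ℝ)*Real.log n) = -(9/20) * Real.log n := by ring
    rw [harg]
    ring
  refine tendsto_of_tendsto_of_tendsto_of_le_of_le'
    (g := fun n : ℕ => 1 - 17 * Real.exp (1/4) * (Real.log n + 1) *
      Real.exp (-(9/20) * Real.log n))
    (h := fun _ : ℕ => (1:ℝ)) ?_ tendsto_const_nhds ?_ ?_
  · simpa using (tendsto_const_nhds (x := (1:ℝ)) (f := atTop)).sub hg0
  · have h1 := hω.eventually_ge_atTop 1
    have h2 := hlog.eventually_ge_atTop 6
    have h3 := eventually_ge_atTop (4:ℕ)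
    filter_upwards [h1, h2, h3] with n hn1 hn2 hn3
    exact zz_main (ω n) n hn1 hn2 hn3
  · refine Eventually.of_forall fun n => ?_
    apply div_le_one_of_le₀
    · have hle : {z : Fin ⌊Real.sqrt n / (ω n * Real.log n)⌋₊ →
          Fin (4 * n) → Equiv.Perm (Fin 4) | ∀ j, FirstSymbolRegular n (z j)}.ncard
          ≤ Fintype.card (Fin ⌊Real.sqrt n / (ω n * Real.log n)⌋₊ →
            Fin (4 * n) → Equiv.Perm (Fin 4)) := by
        have h := Set.ncard_le_ncard (Set.subset_univ
          {z : Fin ⌊Real.sqrt n / (ω n * Real.log n)⌋₊ →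
            Fin (4 * n) → Equiv.Perm (Fin 4) | ∀ j, FirstSymbolRegular n (z j)})
          Set.finite_univ
        rwa [Set.ncard_univ, Nat.card_eq_fintype_card] at h
      exact_mod_cast hle
    · positivity
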